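/- Let N ≥ 1, let λ : Fin N → ℝ with λ k > 0 for all k, and set a*_k := 2/(λ k). Define the total gradient potential F : (Fin N → ℝ) → ℝ by F a := ∑ k, λ k * (a*_k/(a k) − Real.log (a*_k/(a k)) − 1). Let T̃⁺ > 1 and 0 < T̃⁻ < 1, and define the trajectories a⁺ and a⁻ by a± k t := 2 * (1 + (T̃± − 1) * Real.exp (−2*(λ k)*t)) / (λ k). If F (fun k => a⁺ k 0) = F (fun k => a⁻ k 0) (F-equidistant initial conditions), then for all t ≥ 0: F (fun k => a⁻ k t) ≤ F (fun k => a⁺ k t). That is, a Gaussian chain warms up faster than it cools down, universally in the temperature ratio. -/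

import Mathlib

open scoped BigOperators

noncomputable def gql (u : ℝ) : ℝ := (1 + u)⁻¹ + Real.log (1 + u) - 1

lemma gql_zero : gql 0 = 0 := by simp [gql]

lemma hasDerivAt_gql_mul (p s : ℝ) (h : 0 < 1 + p * s) :
    HasDerivAt (fun x => gql (p * x)) (s * (p ^ 2 / (1 + p * s) ^ 2)) s := by
  have hL : HasDerivAt (fun x : ℝ => 1 + p * x) p s := by
    simpa using ((hasDerivAt_id s).const_mul p).const_add 1
  have h1 : HasDerivAt (fun x : ℝ => (1 + p * x)⁻¹) (-p / (1 + p * s) ^ 2) s := by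
    exact hL.inv (ne_of_gt h)
  have h2 : HasDerivAt (fun x : ℝ => Real.log (1 + p * x)) (p / (1 + p * s)) s :=
    hL.log (ne_of_gt h)
  have h3 := (h1.add h2).sub_const 1
  have hne : (1 + p * s) ≠ 0 := ne_of_gt h
  refine h3.congr_deriv ?_
  field_simp
  ring

lemma gql_core (p q : ℝ) (hp : 0 < p) (hq1 : -1 < q) (hq0 : q < 0)
    (hgeq : gql p = gql q) {s : ℝ} (hs0 : 0 < s) (hs1 : s ≤ 1) :
    gql (q * s) ≤ gql (p * s) := by
  set h : ℝ → ℝ := fun x => gql (p * x) - gql (q * x) with hh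
  set m : ℝ → ℝ := fun x => p ^ 2 / (1 + p * x) ^ 2 - q ^ 2 / (1 + q * x) ^ 2 with hm
  have hPpos : ∀ x : ℝ, 0 ≤ x → 0 < 1 + p * x := fun x hx => by nlinarith
  have hQpos : ∀ x : ℝ, 0 ≤ x → x ≤ 1 → 0 < 1 + q * x := fun x hx hx1 => by nlinarith
  have hderiv : ∀ x : ℝ, 0 ≤ x → x ≤ 1 → HasDerivAt h (x * m x) x := by
    intro x hx hx1
    have hd := (hasDerivAt_gql_mul p x (hPpos x hx)).sub
      (hasDerivAt_gql_mul q x (hQpos x hx hx1))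
    refine hd.congr_deriv ?_
    simp only [hm]
    ring
  have hmono : ∀ x y : ℝ, 0 ≤ x → x ≤ y → y ≤ 1 → m y ≤ m x := by
    intro x y hx hxy hy1
    have hPx := hPpos x hx
    have hPy := hPpos y (hx.trans hxy)
    have hQx := hQpos x hx (hxy.trans hy1)
    have hQy := hQpos y (hx.trans hxy) hy1
    have e1 : (1 + p * x) ≤ (1 + p * y) := by nlinarith
    have e2 : (1 + q * y) ≤ (1 + q * x) := by nlinarith
    have h1 : p ^ 2 / (1 + p * y) ^ 2 ≤ p ^ 2 / (1 + p * x) ^ 2 := by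
      gcongr
    have h2 : q ^ 2 / (1 + q * x) ^ 2 ≤ q ^ 2 / (1 + q * y) ^ 2 := by
      gcongr
    simp only [hm]
    linarith
  have h0 : h 0 = 0 := by simp [hh, gql_zero]
  have h1v : h 1 = 0 := by simp [hh, hgeq]
  have key : 0 ≤ h s := by
    rcases le_or_gt 0 (m s) with hms | hms
    · have hcont : ContinuousOn h (Set.Icc 0 s) := fun x hx =>
        ((hderiv x hx.1 (hx.2.trans hs1)).continuousAt.continuousWithinAt)
    
      have hmon := monotoneOn_of_deriv_nonneg (convex_Icc 0 s) hcont
        (fun x hx => by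
          rw [interior_Icc] at hx
          exact (hderiv x hx.1.le (hx.2.le.trans hs1)).differentiableAt.differentiableWithinAt)
        (fun x hx => by
          rw [interior_Icc] at hx
          rw [(hderiv x hx.1.le (hx.2.le.trans hs1)).deriv]
          exact mul_nonneg hx.1.le (le_trans hms (hmono x s hx.1.le hx.2.le hs1)))
      have := hmon (Set.left_mem_Icc.2 hs0.le) (Set.right_mem_Icc.2 hs0.le) hs0.le
      linarith
    · have hcont : ContinuousOn h (Set.Icc s 1) := fun x hx =>
        ((hderiv x (hs0.le.trans hx.1) hx.2).continuousAt.continuousWithinAt)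
      have hanti := antitoneOn_of_deriv_nonpos (convex_Icc s 1) hcont
        (fun x hx => by
          rw [interior_Icc] at hx
          exact (hderiv x (hs0.trans hx.1).le hx.2.le).differentiableAt.differentiableWithinAt)
        (fun x hx => by
          rw [interior_Icc] at hx
          rw [(hderiv x (hs0.trans hx.1).le hx.2.le).deriv]
          have hmx : m x ≤ 0 := le_trans (hmono s x hs0.le hx.1.le hx.2.le) hms.le
          nlinarith [(hs0.trans hx.1).le])
      have := hanti (Set.left_mem_Icc.2 hs1) (Set.right_mem_Icc.2 hs1) hs1
      linarith
  have : gql (q * s) ≤ gql (p * s) := by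
    have := key
    simp only [hh] at this
    linarith
  exact this

theorem gaussian_chain_warming_faster_than_cooling
    (N : ℕ) (hN : 1 ≤ N)
    (lam : Fin N → ℝ) (hlam : ∀ k, 0 < lam k)
    (F : (Fin N → ℝ) → ℝ)
    (hF : ∀ a : Fin N → ℝ,
      F a = ∑ k, lam k * ((2 / lam k) / a k - Real.log ((2 / lam k) / a k) - 1))
    (Tp Tm : ℝ) (hTp : 1 < Tp) (hTm0 : 0 < Tm) (hTm1 : Tm < 1)
    (ap am : Fin N → ℝ → ℝ)
    (hap : ∀ k, ∀ t : ℝ, ap k t = 2 * (1 + (Tp - 1) * Real.exp (-2 * lam k * t)) / lam k)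
    (ham : ∀ k, ∀ t : ℝ, am k t = 2 * (1 + (Tm - 1) * Real.exp (-2 * lam k * t)) / lam k)
    (heq : F (fun k => ap k 0) = F (fun k => am k 0)) :
    ∀ t : ℝ, 0 ≤ t → F (fun k => am k t) ≤ F (fun k => ap k t) := by
  have term : ∀ (l v : ℝ), 0 < l → 0 < 1 + v →
      l * ((2 / l) / (2 * (1 + v) / l) - Real.log ((2 / l) / (2 * (1 + v) / l)) - 1)
        = l * gql v := by
    intro l v hl hv
    have h1 : (2 / l) / (2 * (1 + v) / l) = (1 + v)⁻¹ := by
      field_simp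
    rw [h1, Real.log_inv]
    simp only [gql]
    ring
  have hvpos : ∀ (T : ℝ), 0 < T → ∀ (k : Fin N) (u : ℝ), 0 ≤ u →
      0 < 1 + (T - 1) * Real.exp (-2 * lam k * u) := by
    intro T hT k u hu
    have he0 : 0 < Real.exp (-2 * lam k * u) := Real.exp_pos _
    have he1 : Real.exp (-2 * lam k * u) ≤ 1 := by
      rw [Real.exp_le_one_iff]
      nlinarith [hlam k]
    nlinarith [mul_pos hT he0]
  have Fp : ∀ u : ℝ, 0 ≤ u →
      F (fun k => ap k u) = ∑ k, lam k * gql ((Tp - 1) * Real.exp (-2 * lam k * u)) := by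
    intro u hu
    rw [hF]
    refine Finset.sum_congr rfl fun k _ => ?_
    rw [hap k u]
    exact term (lam k) _ (hlam k) (hvpos Tp (by linarith) k u hu)
  have Fm : ∀ u : ℝ, 0 ≤ u →
      F (fun k => am k u) = ∑ k, lam k * gql ((Tm - 1) * Real.exp (-2 * lam k * u)) := by
    intro u hu
    rw [hF]
    refine Finset.sum_congr rfl fun k _ => ?_
    rw [ham k u]
    exact term (lam k) _ (hlam k) (hvpos Tm hTm0 k u hu)
  haveI : Nonempty (Fin N) := ⟨⟨0, hN⟩⟩
  have hsumpos : 0 < ∑ k, lam k :=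
    Finset.sum_pos (fun k _ => hlam k) Finset.univ_nonempty
  have hsum0 : (∑ k, lam k) * gql (Tp - 1) = (∑ k, lam k) * gql (Tm - 1) := by
    have h1 := Fp 0 le_rfl
    have h2 := Fm 0 le_rfl
    rw [h1, h2] at heq
    simpa [Finset.sum_mul, mul_zero, Real.exp_zero, mul_one] using heq
  have hgeq : gql (Tp - 1) = gql (Tm - 1) := mul_left_cancel₀ hsumpos.ne' hsum0
  intro t ht
  rw [Fp t ht, Fm t ht]
  refine Finset.sum_le_sum fun k _ => ?_
  have hs0 : 0 < Real.exp (-2 * lam k * t) := Real.exp_pos _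
  have hs1 : Real.exp (-2 * lam k * t) ≤ 1 := by
    rw [Real.exp_le_one_iff]
    nlinarith [hlam k]
  exact mul_le_mul_of_nonneg_left
    (gql_core (Tp - 1) (Tm - 1) (by linarith) (by linarith) (by linarith) hgeq hs0 hs1)
    (hlam k).le
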